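/- Let α be a type, σ : Set α, and n : ℕ. Define the NFA M over α with state type Option (Fin n), start = {none}, any accept set, and step given by: step none a = {none} ∪ (if a ∈ σ then {some 0} else ∅), and step (some i) a = if a ∈ σ ∧ i.val + 1 < n then {some ⟨i.val + 1, _⟩} else ∅ (here none represents the control state q₁ carrying the Σ-self-loop and some i represents the token (q₂, i+1) of the counter automaton for Σ*σ{n}). Then for every c ∈ σ and every k ≤ n, M.eval (List.replicate k c) = {none} ∪ {some i | i : Fin n, i.val < k}. (This computes the configurations of the token transition system of the paper's counter automaton for Σ*σ{n} on inputs from σ: after reading k letters of σ, tokens with all counter values 1,…,k are simultaneously active.) -/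

import Mathlib

open Classical in
/-- The token transition system of the counter automaton for `Σ* σ{n}`:
`none` is the state `q₁` with the `Σ`-self-loop, and `some i` is the token
`(q₂, i+1)`. -/
noncomputable def counterNFA {α : Type*} (σ : Set α) (n : ℕ) [NeZero n]
    (accept : Set (Option (Fin n))) : NFA α (Option (Fin n)) where
  start := {none}
  accept := accept
  step s a :=
    match s with
    | none => {none} ∪ (if a ∈ σ then {some 0} else ∅)
    | some i =>
        if h : a ∈ σ ∧ i.val + 1 < n then {some ⟨i.val + 1, h.2⟩} else ∅

theorem stmt_13 {α : Type*} (σ : Set α) (n : ℕ) [NeZero n]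
    (accept : Set (Option (Fin n)))
    (c : α) (hc : c ∈ σ) (k : ℕ) (hk : k ≤ n) :
    (counterNFA σ n accept).eval (List.replicate k c) =
      {none} ∪ {s | ∃ i : Fin n, i.val < k ∧ s = some i} := by
  induction k with
  | zero =>
    ext s
    simp [NFA.eval, NFA.evalFrom, counterNFA]
  | succ k ih =>
    have hkn : k < n := Nat.lt_of_succ_le hk
    rw [List.replicate_succ', NFA.eval, NFA.evalFrom_append, NFA.evalFrom_singleton, ← NFA.eval,
      ih hkn.le]
    ext s
    simp only [NFA.stepSet, Set.mem_iUnion, Set.mem_union, Set.mem_singleton_iff,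
      Set.mem_setOf_eq, counterNFA, exists_prop]
    constructor
    · rintro ⟨t, ht | ⟨i, hi, rfl⟩, hs⟩
      · subst ht
        simp only [if_pos hc] at hs
        rcases hs with hs | hs
        · exact Or.inl hs
        · exact Or.inr ⟨0, Nat.succ_pos k, hs⟩
      · simp only at hs
        split at hs
        · next h =>
          exact Or.inr ⟨⟨i.val + 1, h.2⟩, Nat.succ_lt_succ hi, hs⟩
        · exact absurd hs (Set.notMem_empty s)
    · rintro (rfl | ⟨i, hi, rfl⟩)
      · exact ⟨none, Or.inl rfl, by simp⟩
      · rcases Nat.eq_zero_or_pos i.val with h0 | hpos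
        · refine ⟨none, Or.inl rfl, ?_⟩
          simp only [if_pos hc]
          right
          simp [Fin.ext_iff, h0]
        · obtain ⟨j, hj⟩ : ∃ j, i.val = j + 1 := ⟨i.val - 1, (Nat.succ_pred_eq_of_pos hpos).symm⟩
          have hjn : j < n := by have := i.isLt; omega
          have hjk : j < k := by omega
          refine ⟨some ⟨j, hjn⟩, Or.inr ⟨⟨j, hjn⟩, hjk, rfl⟩, ?_⟩
          have h : c ∈ σ ∧ j + 1 < n := ⟨hc, by have := i.isLt; omega⟩
          simp only [dif_pos h, Set.mem_singleton_iff]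
          simp [Fin.ext_iff, hj]
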